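/- For $t > 0$, $\lim_{t \to +\infty} e^{-t} \sum_{n=1}^{\infty} \left| \frac{t^{n-1}}{(n-1)!} - \frac{t^n}{n!} \right| = 0$. -/

import Mathlib

open Filter

private lemma aux_key (t : ℝ) (i : ℕ) :
    t ^ (i + 1) / ((i + 1).factorial : ℝ) = t ^ i / (i.factorial : ℝ) * (t / (i + 1)) := by
  rw [Nat.factorial_succ]
  push_cast
  rw [div_mul_div_comm, ← pow_succ]
  ring

private lemma aux_tsum (t : ℝ) (ht : 0 ≤ t) :
    ∑' n : ℕ, |t ^ n / (n.factorial : ℝ) - t ^ (n + 1) / ((n + 1).factorial : ℝ)|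
      = 2 * (t ^ ⌊t⌋₊ / (⌊t⌋₊.factorial : ℝ)) - 1 := by
  set a : ℕ → ℝ := fun n => t ^ n / (n.factorial : ℝ) with ha
  set m := ⌊t⌋₊ with hm
  have ha_nonneg : ∀ n, 0 ≤ a n := fun n => by
    simp only [ha]; positivity
  have hsumma : Summable a := Real.summable_pow_div_factorial t
  have hsumma' : Summable (fun n => a (n + 1)) := (summable_nat_add_iff 1).mpr hsumma
  have hsum : Summable (fun n => |a n - a (n + 1)|) := by
    apply Summable.of_nonneg_of_le (fun n => abs_nonneg _) (fun n => ?_) (hsumma.add hsumma')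
    calc |a n - a (n + 1)| ≤ |a n| + |a (n + 1)| := abs_sub _ _
      _ = a n + a (n + 1) := by
          rw [abs_of_nonneg (ha_nonneg n), abs_of_nonneg (ha_nonneg (n + 1))]
  have inc : ∀ i : ℕ, (i : ℝ) + 1 ≤ t → a i ≤ a (i + 1) := by
    intro i hi
    have : a (i + 1) = a i * (t / (i + 1)) := aux_key t i
    rw [this]
    have h1 : (1 : ℝ) ≤ t / (i + 1) := (one_le_div (by positivity)).mpr hi
    calc a i = a i * 1 := (mul_one _).symm
      _ ≤ a i * (t / (i + 1)) := by
          exact mul_le_mul_of_nonneg_left h1 (ha_nonneg i)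
  have dec : ∀ i : ℕ, t ≤ (i : ℝ) + 1 → a (i + 1) ≤ a i := by
    intro i hi
    have : a (i + 1) = a i * (t / (i + 1)) := aux_key t i
    rw [this]
    have h1 : t / ((i : ℝ) + 1) ≤ 1 := (div_le_one (by positivity)).mpr hi
    calc a i * (t / (i + 1)) ≤ a i * 1 :=
        mul_le_mul_of_nonneg_left h1 (ha_nonneg i)
      _ = a i := mul_one _
  have hfloor_le : (m : ℝ) ≤ t := Nat.floor_le ht
  have hlt : t < (m : ℝ) + 1 := Nat.lt_floor_add_one t
  rw [← Summable.sum_add_tsum_nat_add m hsum]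
  have hfirst : ∑ i ∈ Finset.range m, |a i - a (i + 1)| = a m - a 0 := by
    rw [← Finset.sum_range_sub a]
    apply Finset.sum_congr rfl
    intro i hi
    have hi' : i < m := Finset.mem_range.mp hi
    have : (i : ℝ) + 1 ≤ t := by
      have : ((i : ℝ) + 1) ≤ (m : ℝ) := by exact_mod_cast hi'
      linarith
    rw [abs_of_nonpos (by linarith [inc i this])]
    ring
  have hsecond : ∑' n : ℕ, |a (n + m) - a (n + m + 1)| = a m := by
    have heq : ∀ n : ℕ, |a (n + m) - a (n + m + 1)| = a (n + m) - a (n + m + 1) := by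
      intro n
      apply abs_of_nonneg
      have : t ≤ ((n + m : ℕ) : ℝ) + 1 := by
        push_cast
        linarith
      linarith [dec (n + m) this]
    simp_rw [heq]
    have hps : ∀ N : ℕ, ∑ i ∈ Finset.range N, (a (i + m) - a (i + m + 1)) = a m - a (N + m) := by
      intro N
      have := Finset.sum_range_sub' (fun i => a (i + m)) N
      simp only [Nat.zero_add] at this
      rw [← this]
      apply Finset.sum_congr rfl
      intro i _
      congr 2
      omega
    have hnn : ∀ n : ℕ, 0 ≤ a (n + m) - a (n + m + 1) := by
      intro n
      have : t ≤ ((n + m : ℕ) : ℝ) + 1 := by push_cast; linarith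
      linarith [dec (n + m) this]
    have htend : Tendsto (fun N : ℕ => a m - a (N + m)) atTop (nhds (a m)) := by
      have h0 : Tendsto a atTop (nhds 0) := hsumma.tendsto_atTop_zero
      have h1 : Tendsto (fun N : ℕ => a (N + m)) atTop (nhds 0) :=
        h0.comp (tendsto_add_atTop_nat m)
      simpa using tendsto_const_nhds.sub h1
    have : HasSum (fun n : ℕ => a (n + m) - a (n + m + 1)) (a m) := by
      rw [hasSum_iff_tendsto_nat_of_nonneg hnn]
      simpa only [hps] using htend
    exact this.tsum_eq
  rw [hfirst, hsecond]
  have ha0 : a 0 = 1 := by simp [ha]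
  rw [ha0]
  ring

private lemma aux_stirling :
    Tendsto (fun n : ℕ => Real.exp (-(n : ℝ)) * (n : ℝ) ^ n / (n.factorial : ℝ))
      atTop (nhds 0) := by
  have hsqrt : Tendsto Real.sqrt atTop atTop := by
    apply tendsto_atTop_atTop.mpr
    intro b
    refine ⟨max b 0 ^ 2, fun x hx => le_trans (le_max_left b 0) ?_⟩
    rw [← Real.sqrt_sq (le_max_right b 0)]
    exact Real.sqrt_le_sqrt hx
  have h2n : Tendsto (fun n : ℕ => Real.sqrt (2 * n)) atTop atTop := by
    apply hsqrt.comp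
    apply tendsto_atTop_atTop.mpr
    intro b
    obtain ⟨N, hN⟩ := exists_nat_ge b
    exact ⟨N, fun n hn => by
      have : (N : ℝ) ≤ n := by exact_mod_cast hn
      nlinarith [Nat.cast_nonneg (α := ℝ) n]⟩
  have hmul : Tendsto (fun n : ℕ => Stirling.stirlingSeq n * Real.sqrt (2 * n)) atTop atTop := by
    apply Tendsto.pos_mul_atTop (show (0 : ℝ) < Real.sqrt Real.pi by positivity)
      Stirling.tendsto_stirlingSeq_sqrt_pi h2n
  have hinv := hmul.inv_tendsto_atTop
  apply hinv.congr'
  filter_upwards [eventually_ge_atTop 1] with n hn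
  have hn' : (0 : ℝ) < n := by exact_mod_cast hn
  have hsq : (0 : ℝ) < Real.sqrt (2 * n) := Real.sqrt_pos.mpr (by positivity)
  have hfac : (0 : ℝ) < (n.factorial : ℝ) := by positivity
  have hexp : (0 : ℝ) < Real.exp 1 := Real.exp_pos 1
  simp only [Pi.inv_apply, Stirling.stirlingSeq]
  rw [Real.exp_neg, ← Real.exp_one_pow]
  have hpow : ((n : ℝ) / Real.exp 1) ^ n = (n : ℝ) ^ n / Real.exp 1 ^ n := div_pow _ _ _
  rw [hpow]
  have hnp : (0 : ℝ) < (n : ℝ) ^ n := by positivity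
  have hep : (0 : ℝ) < Real.exp 1 ^ n := by positivity
  field_simp

private lemma aux_bound (t : ℝ) (ht : 1 ≤ t) :
    Real.exp (-t) * t ^ ⌊t⌋₊ ≤ Real.exp (-(⌊t⌋₊ : ℝ)) * (⌊t⌋₊ : ℝ) ^ ⌊t⌋₊ := by
  set m := ⌊t⌋₊ with hm
  have hm1 : 1 ≤ m := Nat.one_le_floor_iff t |>.mpr ht
  have hmpos : (0 : ℝ) < m := by exact_mod_cast hm1
  have htpos : (0 : ℝ) < t := by linarith
  have hmt : (m : ℝ) ≤ t := Nat.floor_le (by linarith)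
  have h1 : t ^ m = Real.exp ((m : ℝ) * Real.log t) := by
    rw [Real.exp_nat_mul, Real.exp_log htpos]
  have h2 : (m : ℝ) ^ m = Real.exp ((m : ℝ) * Real.log m) := by
    rw [Real.exp_nat_mul, Real.exp_log hmpos]
  rw [h1, h2, ← Real.exp_add, ← Real.exp_add, Real.exp_le_exp]
  have hlog : Real.log t - Real.log m ≤ t / m - 1 := by
    rw [← Real.log_div (ne_of_gt htpos) (ne_of_gt hmpos)]
    exact Real.log_le_sub_one_of_pos (by positivity)
  have : (m : ℝ) * (Real.log t - Real.log m) ≤ (m : ℝ) * (t / m - 1) :=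
    mul_le_mul_of_nonneg_left hlog (le_of_lt hmpos)
  have hid : (m : ℝ) * (t / m - 1) = t - m := by
    field_simp
  nlinarith

/-- `lim_{t → +∞} e^{-t} ∑_{n=1}^∞ |t^{n-1}/(n-1)! - t^n/n!| = 0`. -/
theorem stmt_1 :
    Tendsto (fun t : ℝ =>
        Real.exp (-t) *
          ∑' n : ℕ, |t ^ n / (n.factorial : ℝ) - t ^ (n + 1) / ((n + 1).factorial : ℝ)|)
      atTop (nhds 0) := by
  have hupper : Tendsto (fun t : ℝ =>
      2 * (Real.exp (-(⌊t⌋₊ : ℝ)) * (⌊t⌋₊ : ℝ) ^ ⌊t⌋₊ / (⌊t⌋₊.factorial : ℝ)))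
      atTop (nhds 0) := by
    have := (aux_stirling.const_mul 2).comp tendsto_nat_floor_atTop (α := ℝ)
    simpa [Function.comp_def] using this
  apply tendsto_of_tendsto_of_tendsto_of_le_of_le' tendsto_const_nhds hupper
  · filter_upwards with t
    apply mul_nonneg (le_of_lt (Real.exp_pos _))
    exact tsum_nonneg (fun n => abs_nonneg _)
  · filter_upwards [eventually_ge_atTop (1 : ℝ)] with t ht
    have ht0 : (0 : ℝ) ≤ t := by linarith
    rw [aux_tsum t ht0]
    set m := ⌊t⌋₊ with hm
    have hfac : (0 : ℝ) < (m.factorial : ℝ) := by positivity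
    have hb := aux_bound t ht
    have hexp : (0 : ℝ) < Real.exp (-t) := Real.exp_pos _
    have hdiv : Real.exp (-t) * t ^ m / (m.factorial : ℝ) ≤
        Real.exp (-(m : ℝ)) * (m : ℝ) ^ m / (m.factorial : ℝ) :=
      by gcongr
    have htm : (0 : ℝ) ≤ t ^ m / (m.factorial : ℝ) := by positivity
    calc Real.exp (-t) * (2 * (t ^ m / (m.factorial : ℝ)) - 1)
        ≤ Real.exp (-t) * (2 * (t ^ m / (m.factorial : ℝ))) := by
          apply mul_le_mul_of_nonneg_left _ (le_of_lt hexp)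
          linarith
      _ = 2 * (Real.exp (-t) * t ^ m / (m.factorial : ℝ)) := by ring
      _ ≤ 2 * (Real.exp (-(m : ℝ)) * (m : ℝ) ^ m / (m.factorial : ℝ)) := by linarith
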